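/- Let G be a finite abelian group of order rℓ with a subgroup H of order r, and let p be a prime dividing ℓ. Then there exists an element D ∈ G \ H such that D^{r_{[p]}·p} = identity, where r_{[p]} is the largest power of p dividing r. -/
import Mathlib


/-- a finite abelian group `G` of order `rℓ` with a subgroup `H` of order `r`,
and a prime `p ∣ ℓ`, contains an element `D ∉ H` with `D^{r_{[p]}·p} = 1`, where
`r_{[p]} = p^{v_p(r)}` is the largest power of `p` dividing `r`. -/
theorem stmt5 {G : Type*} [CommGroup G] [Fintype G] (H : Subgroup G) (r ℓ p : ℕ)
    (hp : p.Prime) (hpl : p ∣ ℓ) (hG : Fintype.card G = r * ℓ) (hH : Nat.card H = r) :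
    ∃ D : G, D ∉ H ∧ D ^ (p ^ (r.factorization p) * p) = 1 := by
  haveI : Fact p.Prime := ⟨hp⟩
  have hr0 : 0 < r := hH ▸ Nat.card_pos
  -- card of quotient is ℓ
  have hq : Nat.card (G ⧸ H) = ℓ := by
    have := Subgroup.card_eq_card_quotient_mul_card_subgroup H
    rw [hH, Nat.card_eq_fintype_card, hG, mul_comm r ℓ] at this
    exact (Nat.eq_of_mul_eq_mul_right hr0 this.symm)
  -- Cauchy in the quotient
  have hpq : p ∣ Nat.card (G ⧸ H) := hq ▸ hpl
  obtain ⟨x, hx⟩ := exists_prime_orderOf_dvd_card' (G := G ⧸ H) p hpq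
  obtain ⟨g, rfl⟩ := QuotientGroup.mk_surjective x
  -- h := g^p lies in H
  have hgp : (g : G) ^ p ∈ H := by
    rw [← QuotientGroup.eq_one_iff, QuotientGroup.mk_pow]
    rw [← hx]; exact pow_orderOf_eq_one _
  set m := orderOf ((g : G) ^ p) with hm
  have hm0 : m ≠ 0 := (orderOf_pos _).ne'
  have hmr : m ∣ r := by
    have : orderOf (⟨(g : G) ^ p, hgp⟩ : H) ∣ Nat.card H := orderOf_dvd_natCard _
    rwa [Subgroup.orderOf_mk, hH] at this
  set c := m.factorization p with hc
  set m' := m / p ^ c with hm'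
  have hmm : p ^ c * m' = m := Nat.ordProj_mul_ordCompl_eq_self m p
  have hpm' : ¬ p ∣ m' := Nat.not_dvd_ordCompl hp hm0
  have hca : c ≤ r.factorization p := by
    have := (Nat.factorization_le_iff_dvd hm0 hr0.ne').2 hmr
    exact this p
  refine ⟨g ^ m', ?_, ?_⟩
  · intro hmem
    have h1 : (QuotientGroup.mk g : G ⧸ H) ^ m' = 1 := by
      rw [← QuotientGroup.mk_pow, QuotientGroup.eq_one_iff]
      exact hmem
    have := orderOf_dvd_of_pow_eq_one h1
    rw [hx] at this
    exact hpm' this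
  · have key : m ∣ m' * p ^ (r.factorization p) := by
      rw [← hmm]
      exact mul_dvd_mul (pow_dvd_pow p hca) dvd_rfl |>.trans (by rw [mul_comm])
    calc (g ^ m') ^ (p ^ (r.factorization p) * p)
        = ((g : G) ^ p) ^ (m' * p ^ (r.factorization p)) := by
          rw [← pow_mul, ← pow_mul]; ring_nf
      _ = 1 := orderOf_dvd_iff_pow_eq_one.1 key
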